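/- Let G be a finite connected simple graph with vertex set V, r ∈ V a distinguished root, and B ⊆ V a set of Byzantine vertices with r ∉ B. Set R = B ∪ {r}, and let P : V → Option V and H : V → ℕ satisfy: P(v) = none and H(v) = 0 for every v ∈ R; and for every v ∉ R, P(v) = some u for some neighbor u of v with H(u) = min{H(w) : w a neighbor of v} and H(v) = H(u) + 1. Then for every vertex v lying outside the containment zone S_B (i.e. d(v,b) > d(r,v) for every b ∈ B), following the parent pointers from v reaches the root r (and not a Byzantine vertex) in exactly d(r,v) steps, and every vertex on this parent path lies outside S_B. -/

import Mathlib

section Aux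

variable {V : Type*} [Fintype V] (G : SimpleGraph V) (hG : G.Connected) (r : V)
    (B : Set V) (hrB : r ∉ B)
    (P : V → Option V) (H : V → ℕ)
    (hroot : ∀ v ∈ B ∪ {r}, P v = none ∧ H v = 0)
    (hvert : ∀ v ∉ B ∪ {r}, ∃ u : V, P v = some u ∧ G.Adj v u ∧
      H u = sInf (H '' (G.neighborSet v)) ∧ H v = H u + 1)

include hG hroot hvert in
lemma auxA : ∀ n : ℕ, ∀ v : V, G.dist r v = n → H v ≤ n := by
  intro n
  induction n using Nat.strong_induction_on with
  | _ n IH =>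
    intro v hv
    by_cases hvR : v ∈ B ∪ {r}
    · exact (hroot v hvR).2 ▸ Nat.zero_le n
    · have hvr : v ≠ r := fun h => hvR (Or.inr (by simp [h]))
      have hn : 0 < n := by
        rcases Nat.eq_zero_or_pos n with h0 | h
        · exact absurd ((hG.dist_eq_zero_iff).mp (hv.trans h0)).symm hvr
        · exact h
      obtain ⟨p, hp⟩ := hG.exists_walk_length_eq_dist v r
      rw [SimpleGraph.dist_comm, hv] at hp
      cases p with
      | nil => simp at hp; omega
      | cons h q =>
        rename_i u
        have hq : q.length = n - 1 := by
          simp [SimpleGraph.Walk.length_cons] at hp; omega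
        have hdu : G.dist r u ≤ n - 1 := by
          have := SimpleGraph.dist_le q
          rw [hq] at this
          rw [SimpleGraph.dist_comm]; exact this
        have hHu : H u ≤ n - 1 := by
          have := IH (G.dist r u) (lt_of_le_of_lt hdu (by omega)) u rfl
          omega
        obtain ⟨w, hPw, hadj, hsInf, hHv⟩ := hvert v hvR
        have hmem : H u ∈ H '' (G.neighborSet v) := ⟨u, h, rfl⟩
        have : sInf (H '' (G.neighborSet v)) ≤ H u := Nat.sInf_le hmem
        omega

include hG hvert in
lemma auxB : ∀ n : ℕ, ∀ v : V, H v = n → ∃ ρ ∈ B ∪ {r}, G.dist ρ v ≤ n := by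
  intro n
  induction n using Nat.strong_induction_on with
  | _ n IH =>
    intro v hv
    by_cases hvR : v ∈ B ∪ {r}
    · exact ⟨v, hvR, by rw [SimpleGraph.dist_self]; omega⟩
    · obtain ⟨u, hPu, hadj, hsInf, hHv⟩ := hvert v hvR
      have hHu : H u = n - 1 ∧ 0 < n := by omega
      obtain ⟨ρ, hρ, hdρ⟩ := IH (n - 1) (by omega) u hHu.1
      refine ⟨ρ, hρ, ?_⟩
      have htri := hG.dist_triangle (u := ρ) (v := u) (w := v)
      have h1 : G.dist u v = 1 := SimpleGraph.dist_eq_one_iff_adj.mpr hadj.symm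
      omega

end Aux

/-- In a legitimate configuration of the `min+1` spanning-forest protocol with root set
`R = B ∪ {r}`, following the parent pointers from any vertex `v` lying outside the containment
zone `S_B` reaches the real root `r` (and not a Byzantine vertex) in exactly `d(r,v)` steps,
and every vertex on this parent path lies outside `S_B`. -/
theorem parent_path_outside_SB_reaches_root
    {V : Type*} [Fintype V] (G : SimpleGraph V) (hG : G.Connected) (r : V)
    (B : Set V) (hrB : r ∉ B)
    (P : V → Option V) (H : V → ℕ)
    (hroot : ∀ v ∈ B ∪ {r}, P v = none ∧ H v = 0)
    (hvert : ∀ v ∉ B ∪ {r}, ∃ u : V, P v = some u ∧ G.Adj v u ∧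
      H u = sInf (H '' (G.neighborSet v)) ∧ H v = H u + 1)
    (step : V → V)
    (hstep : ∀ v u : V, P v = some u → step v = u) :
    ∀ v : V, (∀ b ∈ B, G.dist r v < G.dist v b) →
      step^[G.dist r v] v = r ∧
      (∀ i < G.dist r v, step^[i] v ≠ r) ∧
      (∀ i ≤ G.dist r v, ∀ b ∈ B, G.dist r (step^[i] v) < G.dist (step^[i] v) b) := by
  -- vertices outside S_B have H v = dist r v
  have hHeq : ∀ v : V, (∀ b ∈ B, G.dist r v < G.dist v b) → H v = G.dist r v := by
    intro v hout
    have h1 : H v ≤ G.dist r v := auxA G hG r B P H hroot hvert _ v rfl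
    obtain ⟨ρ, hρ, hdρ⟩ := auxB G hG r B P H hvert _ v rfl
    rcases hρ with hρB | hρr
    · have := hout ρ hρB
      rw [SimpleGraph.dist_comm (u := v) (v := ρ)] at this
      omega
    · simp only [Set.mem_singleton_iff] at hρr
      subst hρr
      omega
  -- key step lemma
  have hkey : ∀ v : V, (∀ b ∈ B, G.dist r v < G.dist v b) → v ≠ r →
      step v ≠ v ∧ G.dist r (step v) + 1 = G.dist r v ∧
      (∀ b ∈ B, G.dist r (step v) < G.dist (step v) b) := by
    intro v hout hvr
    have hvB : v ∉ B := fun hvB => by have := hout v hvB; rw [SimpleGraph.dist_self] at this; omega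
    have hvR : v ∉ B ∪ {r} := by
      rintro (h | h)
      · exact hvB h
      · exact hvr h
    obtain ⟨u, hPu, hadj, hsInf, hHv⟩ := hvert v hvR
    have hsu : step v = u := hstep v u hPu
    have hHveq := hHeq v hout
    have hdv : 0 < G.dist r v := hG.pos_dist_of_ne (Ne.symm hvr)
    have hdvu : G.dist v u = 1 := SimpleGraph.dist_eq_one_iff_adj.mpr hadj
    -- u is outside S_B and dist r u = dist r v - 1
    have houtu : ∀ b ∈ B, G.dist r v - 1 < G.dist u b := by
      intro b hb
      have htri := hG.dist_triangle (u := v) (v := u) (w := b)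
      have := hout b hb
      omega
    have hHu : H u = G.dist r v - 1 := by omega
    obtain ⟨ρ, hρ, hdρ⟩ := auxB G hG r B P H hvert _ u rfl
    rw [hHu] at hdρ
    have hρr : ρ = r := by
      rcases hρ with hρB | hρr
      · have := houtu ρ hρB
        rw [SimpleGraph.dist_comm (u := u) (v := ρ)] at this
        omega
      · simpa using hρr
    rw [hρr] at hdρ
    have hdru : G.dist r u = G.dist r v - 1 := by
      have htri := hG.dist_triangle (u := r) (v := u) (w := v)
      rw [SimpleGraph.dist_comm (u := u) (v := v), hdvu] at htri
      omega
    refine ⟨?_, ?_, ?_⟩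
    · rw [hsu]; exact fun h => (G.loopless.irrefl v) (h ▸ hadj)
    · rw [hsu]; omega
    · intro b hb
      rw [hsu]
      have := houtu b hb
      omega
  -- main induction on dist r v
  suffices hmain : ∀ n : ℕ, ∀ v : V, G.dist r v = n →
      (∀ b ∈ B, G.dist r v < G.dist v b) →
      step^[n] v = r ∧ (∀ i < n, step^[i] v ≠ r) ∧
      (∀ i ≤ n, ∀ b ∈ B, G.dist r (step^[i] v) < G.dist (step^[i] v) b) by
    intro v hout
    exact hmain (G.dist r v) v rfl hout
  intro n
  induction n with
  | zero =>
    intro v hdv hout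
    have hvr : v = r := ((hG.dist_eq_zero_iff).mp hdv).symm
    subst hvr
    refine ⟨rfl, by omega, ?_⟩
    intro i hi b hb
    interval_cases i
    simpa using hout b hb
  | succ n IH =>
    intro v hdv hout
    have hvr : v ≠ r := by
      intro h; subst h; simp [SimpleGraph.dist_self] at hdv
    obtain ⟨_, hdstep, houtstep⟩ := hkey v hout hvr
    have hdu : G.dist r (step v) = n := by omega
    obtain ⟨h1, h2, h3⟩ := IH (step v) hdu houtstep
    refine ⟨?_, ?_, ?_⟩
    · rw [Function.iterate_succ_apply]; exact h1
    · intro i hi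
      cases i with
      | zero => simpa using hvr
      | succ j =>
        rw [Function.iterate_succ_apply]
        exact h2 j (by omega)
    · intro i hi b hb
      cases i with
      | zero => simpa using hout b hb
      | succ j =>
        rw [Function.iterate_succ_apply]
        exact h3 j (by omega) b hb
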